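/- Let k be a commutative ring, and let C be a small category with finite products in which the terminal object ∗ is a zero (null) object. Let F : C ⥤ Mod_k be a symmetric monoidal functor with respect to the cartesian monoidal structure on C and the tensor product on Mod_k, with structure isomorphisms μ_{X,Y} : F(X) ⊗ F(Y) ≅ F(X × Y) and F(∗) ≅ k. Fix X ∈ C and n ∈ ℕ. For 1 ≤ m ≤ n+1 let τ_m : X^{×(n+1)} → X^{×(n+1)} be id^{×(m−1)} × p_X × id^{×(n+1−m)} where p_X := η_X ∘ ε_X, set e_m := id − F(τ_m) ∈ End_k(F(X^{×(n+1)})), and χ := e_1 ∘ e_2 ∘ ⋯ ∘ e_{n+1}. Let F̃(X) be the coaugmented coalgebra with underlying module F(X), comultiplication μ_{X,X}^{−1} ∘ F(Δ_X) (Δ_X : X → X × X the diagonal), counit induced by F(ε_X) and F(∗) ≅ k, and coaugmentation induced by F(η_X). Then ker(χ ∘ F(Δ^{(n+1)}_X) : F(X) → F(X^{×(n+1)})) = P_n(F̃(X)), i.e. the n-th polynomial approximation of F evaluated at X coincides with the n-th coradical filtration of F̃(X). -/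

import Mathlib

open TensorProduct

noncomputable section

universe u

variable (R : Type u) [CommRing R]

/-- `Tpow R H n` is the `n`-th tensor power `H^{⊗n}` of the `R`-module `H`,
defined recursively by `H^{⊗0} = R` and `H^{⊗(n+1)} = H ⊗ H^{⊗n}`. -/
def Tpow (H : Type u) [AddCommGroup H] [Module R H] : ℕ → ModuleCat.{u} R
  | 0 => ModuleCat.of R R
  | n + 1 => ModuleCat.of R (H ⊗[R] (Tpow H n))

variable {R}
variable {H : Type u} [AddCommGroup H] [Module R H]

/-- The iterated comultiplication `Δ^{(n)} : H → H^{⊗n}`: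
`Δ^{(0)} = ε`, `Δ^{(1)} = id` (as the canonical map `H ≅ H ⊗ R`), and
`Δ^{(n+1)} = (Δ ⊗ id^{⊗(n−1)}) ∘ Δ^{(n)}`. -/
def iterComul (Δc : H →ₗ[R] H ⊗[R] H) (εc : H →ₗ[R] R) : (n : ℕ) → (H →ₗ[R] Tpow R H n)
  | 0 => εc
  | 1 => (TensorProduct.rid R H).symm.toLinearMap
  | n + 2 =>
      (TensorProduct.assoc R H H (Tpow R H n)).toLinearMap
        ∘ₗ (LinearMap.rTensor (Tpow R H n) Δc)
        ∘ₗ (iterComul Δc εc (n + 1))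

/-- The `n`-fold tensor power `e^{⊗n} : H^{⊗n} → H^{⊗n}` of a linear endomorphism `e`. -/
def mapPow (e : H →ₗ[R] H) : (n : ℕ) → (Tpow R H n →ₗ[R] Tpow R H n)
  | 0 => LinearMap.id
  | n + 1 => TensorProduct.map e (mapPow e n)

/-- `e_H := id − η ∘ ε`, where `η : R → H` is the coaugmentation `r ↦ r • u` sending `1` to `u`. -/
def eAug (εc : H →ₗ[R] R) (u : H) : H →ₗ[R] H :=
  LinearMap.id - (LinearMap.toSpanSingleton R H u) ∘ₗ εc

/-- `δ^n := e_H^{⊗n} ∘ Δ^{(n)} : H → H^{⊗n}`. -/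
def deltaPow (Δc : H →ₗ[R] H ⊗[R] H) (εc : H →ₗ[R] R) (u : H) (n : ℕ) :
    H →ₗ[R] Tpow R H n :=
  (mapPow (eAug εc u) n) ∘ₗ (iterComul Δc εc n)

/-- The `n`-th term `P_n(H) := ker (δ^{n+1})` of the coradical filtration. -/
def corad (Δc : H →ₗ[R] H ⊗[R] H) (εc : H →ₗ[R] R) (u : H) (n : ℕ) : Submodule R H :=
  LinearMap.ker (deltaPow Δc εc u (n + 1))

open CategoryTheory MonoidalCategory CartesianMonoidalCategory in
/-- The iterated product `X^{×n}` in a category with (chosen) finite products: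
`X^{×0} = ∗` (the unit/terminal object) and `X^{×(n+1)} = X × X^{×n}`. -/
def opow {C : Type u} [CategoryTheory.SmallCategory C] [CategoryTheory.CartesianMonoidalCategory C]
    (X : C) : ℕ → C
  | 0 => 𝟙_ C
  | n + 1 => X ⊗ opow X n

open CategoryTheory MonoidalCategory CartesianMonoidalCategory in
/-- The diagonal `Δ_X : X → X × X`. -/
def cdiag {C : Type u} [SmallCategory C] [CartesianMonoidalCategory C] (X : C) : X ⟶ X ⊗ X :=
  lift (𝟙 X) (𝟙 X)

open CategoryTheory MonoidalCategory CartesianMonoidalCategory in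
/-- The `n`-fold iterated diagonal `Δ^{(n)}_X : X → X^{×n}`. -/
def iterDiag {C : Type u} [SmallCategory C] [CartesianMonoidalCategory C] (X : C) :
    (n : ℕ) → (X ⟶ opow X n)
  | 0 => toUnit X
  | 1 => (ρ_ X).inv
  | n + 2 => iterDiag X (n + 1) ≫ (cdiag X ▷ opow X n) ≫ (α_ X X (opow X n)).hom

open CategoryTheory MonoidalCategory CartesianMonoidalCategory in
/-- `τ_m = id^{×(m-1)} × p_X × id^{×(n-m)} : X^{×n} → X^{×n}`, where
`p_X = η_X ∘ ε_X : X → X` (using that the terminal object is initial). -/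
def tauAt {C : Type u} [SmallCategory C] [CartesianMonoidalCategory C]
    (hnull : CategoryTheory.Limits.IsInitial (𝟙_ C)) (X : C) :
    (n : ℕ) → ℕ → (opow X n ⟶ opow X n)
  | 0, _ => 𝟙 _
  | n + 1, 0 => (toUnit X ≫ hnull.to X) ▷ opow X n
  | n + 1, m + 1 => X ◁ tauAt hnull X n m

/-! ### Auxiliary machinery for `stmt19` -/

section Stmt19Aux

open CategoryTheory MonoidalCategory CartesianMonoidalCategory Functor.LaxMonoidal
  Functor.OplaxMonoidal

variable {k : Type u} [CommRing k] {C : Type u} [SmallCategory C]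
  [CartesianMonoidalCategory C] (F : C ⥤ ModuleCat.{u} k) [F.Monoidal] (X : C)

/-- The monoidal structure map `(F X)^{⊗ n} ⟶ F (X^{× n})`. -/
def muPow : (n : ℕ) → (Tpow k (F.obj X) n ⟶ F.obj (opow X n))
  | 0 => ε F
  | n + 1 => ((F.obj X : ModuleCat k) ◁ muPow n) ≫ μ F X (opow X n)

/-- The inverse monoidal structure map `F (X^{× n}) ⟶ (F X)^{⊗ n}`. -/
def nuPow : (n : ℕ) → (F.obj (opow X n) ⟶ Tpow k (F.obj X) n)
  | 0 => η F
  | n + 1 => δ F X (opow X n) ≫ ((F.obj X : ModuleCat k) ◁ nuPow n)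

lemma muPow_nuPow : ∀ n, muPow F X n ≫ nuPow F X n = 𝟙 _
  | 0 => Functor.Monoidal.ε_η (F := F)
  | n + 1 => by
    show ((F.obj X : ModuleCat k) ◁ muPow F X n ≫ μ F X (opow X n)) ≫
      (δ F X (opow X n) ≫ (F.obj X : ModuleCat k) ◁ nuPow F X n) = 𝟙 _
    rw [Category.assoc, Functor.Monoidal.μ_δ_assoc,
      ← MonoidalCategory.whiskerLeft_comp, muPow_nuPow n, MonoidalCategory.whiskerLeft_id]

lemma muPow_injective (n : ℕ) :
    Function.Injective ((muPow F X n).hom : Tpow k (F.obj X) n →ₗ[k] F.obj (opow X n)) := by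
  have h : (nuPow F X n).hom ∘ₗ (muPow F X n).hom = LinearMap.id := by
    have := congrArg ModuleCat.Hom.hom (muPow_nuPow F X n)
    exact this
  intro a b hab
  have ha := LinearMap.congr_fun h a
  have hb := LinearMap.congr_fun h b
  simp only [LinearMap.coe_comp, Function.comp_apply, LinearMap.id_apply] at ha hb
  rw [← ha, ← hb, hab]

lemma muPow_succ_lin (n : ℕ) :
    ((muPow F X (n + 1)).hom : Tpow k (F.obj X) (n + 1) →ₗ[k] F.obj (opow X (n + 1)))
      = (μ F X (opow X n)).hom ∘ₗ
        LinearMap.lTensor (F.obj X) (muPow F X n).hom :=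
  rfl

variable {F X}

/-- Category-level naturality, in linear-map form: left whiskering. -/
lemma muNatRight {P : C} (g : P ⟶ P) :
    (F.map (X ◁ g)).hom ∘ₗ (μ F X P).hom
      = (μ F X P).hom ∘ₗ LinearMap.lTensor (F.obj X) (F.map g).hom := by
  have := congrArg ModuleCat.Hom.hom (μ_natural_right F X g).symm
  exact this

lemma muNatLeft {P : C} (f : X ⟶ X) :
    (F.map (f ▷ P)).hom ∘ₗ (μ F X P).hom
      = (μ F X P).hom ∘ₗ LinearMap.rTensor (F.obj P) (F.map f).hom := by
  have := congrArg ModuleCat.Hom.hom (μ_natural_left F f P).symm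
  exact this

lemma muNatRight_sub {P : C} (g : P ⟶ P) :
    (LinearMap.id - (F.map (X ◁ g)).hom) ∘ₗ (μ F X P).hom
      = (μ F X P).hom ∘ₗ
        LinearMap.lTensor (F.obj X) (LinearMap.id - (F.map g).hom) := by
  rw [LinearMap.lTensor_sub, LinearMap.lTensor_id, LinearMap.comp_sub, LinearMap.sub_comp,
    LinearMap.id_comp, LinearMap.comp_id, muNatRight]

lemma muNatLeft_sub {P : C} (f : X ⟶ X) :
    (LinearMap.id - (F.map (f ▷ P)).hom) ∘ₗ (μ F X P).hom
      = (μ F X P).hom ∘ₗ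
        LinearMap.rTensor (F.obj P) (LinearMap.id - (F.map f).hom) := by
  rw [LinearMap.rTensor_sub, LinearMap.rTensor_id, LinearMap.comp_sub, LinearMap.sub_comp,
    LinearMap.id_comp, LinearMap.comp_id, muNatLeft]

/-- Conjugating a `foldr` of endomorphisms through a linear map. -/
lemma foldr_conj {M N : Type u} [AddCommGroup M] [Module k M] [AddCommGroup N] [Module k N]
    (Φ : M →ₗ[k] N) : ∀ {n : ℕ} (f : Fin n → (N →ₗ[k] N)) (g : Fin n → (M →ₗ[k] M)),
    (∀ i, f i ∘ₗ Φ = Φ ∘ₗ g i) →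
    ((List.ofFn f).foldr (· ∘ₗ ·) LinearMap.id) ∘ₗ Φ
      = Φ ∘ₗ ((List.ofFn g).foldr (· ∘ₗ ·) LinearMap.id)
  | 0, f, g, h => by simp
  | n + 1, f, g, h => by
    rw [List.ofFn_succ, List.ofFn_succ, List.foldr_cons, List.foldr_cons,
      LinearMap.comp_assoc, foldr_conj Φ _ _ (fun i => h i.succ), ← LinearMap.comp_assoc,
      h 0, LinearMap.comp_assoc]

lemma foldr_lTensor {M N : Type u} [AddCommGroup M] [Module k M] [AddCommGroup N] [Module k N] :
    ∀ {n : ℕ} (f : Fin n → (N →ₗ[k] N)),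
    ((List.ofFn fun i => LinearMap.lTensor M (f i)).foldr (· ∘ₗ ·) LinearMap.id :
        M ⊗[k] N →ₗ[k] M ⊗[k] N)
      = LinearMap.lTensor M ((List.ofFn f).foldr (· ∘ₗ ·) LinearMap.id)
  | 0, f => by simp [LinearMap.lTensor_id]
  | n + 1, f => by
    rw [List.ofFn_succ, List.ofFn_succ, List.foldr_cons, List.foldr_cons,
      foldr_lTensor (fun i => f i.succ), LinearMap.lTensor_comp]

variable (F X)

/-- `χ_n` as a linear map. -/
def chiMap (hnull : CategoryTheory.Limits.IsInitial (𝟙_ C)) (n : ℕ) :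
    F.obj (opow X n) →ₗ[k] F.obj (opow X n) :=
  (List.ofFn fun m : Fin n =>
    (LinearMap.id - (F.map (tauAt hnull X n m)).hom :
      F.obj (opow X n) →ₗ[k] F.obj (opow X n))).foldr (· ∘ₗ ·) LinearMap.id

lemma chi_compat (hnull : CategoryTheory.Limits.IsInitial (𝟙_ C)) :
    ∀ n, chiMap F X hnull n ∘ₗ (muPow F X n).hom
      = (muPow F X n).hom ∘ₗ
        mapPow (LinearMap.id - (F.map (toUnit X ≫ hnull.to X)).hom) n
  | 0 => by
    simp [chiMap, mapPow]
  | n + 1 => by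
    set e : F.obj X →ₗ[k] F.obj X :=
      LinearMap.id - (F.map (toUnit X ≫ hnull.to X)).hom with he
    set A : F.obj (opow X (n + 1)) →ₗ[k] F.obj (opow X (n + 1)) :=
      LinearMap.id - (F.map (tauAt hnull X (n + 1) ((0 : Fin (n + 1)) : ℕ))).hom with hA
    set Rest : F.obj (opow X (n + 1)) →ₗ[k] F.obj (opow X (n + 1)) :=
      ((List.ofFn fun m : Fin n =>
        (LinearMap.id - (F.map (tauAt hnull X (n + 1) ((m.succ : Fin (n + 1)) : ℕ))).hom :
          F.obj (opow X (n + 1)) →ₗ[k] F.obj (opow X (n + 1)))).foldr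
          (· ∘ₗ ·) LinearMap.id) with hRest
    have hrest : Rest ∘ₗ (μ F X (opow X n)).hom
          = (μ F X (opow X n)).hom ∘ₗ
            LinearMap.lTensor (F.obj X) (chiMap F X hnull n) := by
      rw [hRest, chiMap, ← foldr_lTensor]
      refine foldr_conj _ _ _ (fun i => ?_)
      have hv : tauAt hnull X (n + 1) ((i.succ : Fin (n + 1)) : ℕ)
          = X ◁ tauAt hnull X n i := by
        simp only [Fin.val_succ]
        rfl
      rw [hv]
      exact muNatRight_sub _
    have hmu : A ∘ₗ (μ F X (opow X n)).hom
        = (μ F X (opow X n)).hom ∘ₗ LinearMap.rTensor (F.obj (opow X n)) e := by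
      have h0 : tauAt hnull X (n + 1) ((0 : Fin (n + 1)) : ℕ)
          = (toUnit X ≫ hnull.to X) ▷ opow X n := rfl
      rw [hA, h0, he]
      exact muNatLeft_sub _
    have hchi : chiMap F X hnull (n + 1) = A ∘ₗ Rest := by
      rw [chiMap, List.ofFn_succ, List.foldr_cons, hA, hRest]
    rw [hchi, muPow_succ_lin]
    have h12 : (A ∘ₗ Rest) ∘ₗ (μ F X (opow X n)).hom ∘ₗ
          LinearMap.lTensor (F.obj X) (muPow F X n).hom
        = (A ∘ₗ (μ F X (opow X n)).hom) ∘ₗ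
            LinearMap.lTensor (F.obj X) (chiMap F X hnull n ∘ₗ (muPow F X n).hom) := by
      calc (A ∘ₗ Rest) ∘ₗ (μ F X (opow X n)).hom ∘ₗ
            LinearMap.lTensor (F.obj X) (muPow F X n).hom
          = A ∘ₗ (Rest ∘ₗ (μ F X (opow X n)).hom) ∘ₗ
              LinearMap.lTensor (F.obj X) (muPow F X n).hom := by
            rfl
        _ = (A ∘ₗ (μ F X (opow X n)).hom) ∘ₗ
              LinearMap.lTensor (F.obj X)
                (chiMap F X hnull n ∘ₗ (muPow F X n).hom) := by
            rw [hrest, LinearMap.lTensor_comp]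
            rfl
    refine h12.trans ?_
    calc _ = ((μ F X (opow X n)).hom ∘ₗ LinearMap.rTensor (F.obj (opow X n)) e) ∘ₗ
            LinearMap.lTensor (F.obj X)
              ((muPow F X n).hom ∘ₗ mapPow e n) := by
          rw [hmu, chi_compat hnull n]
          rfl
      _ = (μ F X (opow X n)).hom ∘ₗ
            (LinearMap.rTensor (F.obj (opow X n)) e ∘ₗ
              LinearMap.lTensor (F.obj X) (muPow F X n).hom) ∘ₗ
            LinearMap.lTensor (F.obj X) (mapPow e n) := by
          rw [LinearMap.lTensor_comp]
          simp only [LinearMap.comp_assoc]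
      _ = (μ F X (opow X n)).hom ∘ₗ
            (LinearMap.lTensor (F.obj X) (muPow F X n).hom ∘ₗ
              LinearMap.rTensor (Tpow k (F.obj X) n) e) ∘ₗ
            LinearMap.lTensor (F.obj X) (mapPow e n) := by
          rw [LinearMap.rTensor_comp_lTensor, LinearMap.lTensor_comp_rTensor]
      _ = ((μ F X (opow X n)).hom ∘ₗ
            LinearMap.lTensor (F.obj X) (muPow F X n).hom) ∘ₗ
            (LinearMap.rTensor (Tpow k (F.obj X) n) e ∘ₗ
              LinearMap.lTensor (F.obj X) (mapPow e n)) := by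
          simp only [LinearMap.comp_assoc]
      _ = ((μ F X (opow X n)).hom ∘ₗ
            LinearMap.lTensor (F.obj X) (muPow F X n).hom) ∘ₗ
              TensorProduct.map e (mapPow e n) := by
          rw [LinearMap.rTensor_comp_lTensor]

lemma comul_compat :
    ∀ n, (muPow F X n).hom ∘ₗ
        iterComul ((δ F X X).hom ∘ₗ (F.map (cdiag X)).hom)
          ((η F).hom ∘ₗ (F.map (toUnit X)).hom) n
      = (F.map (iterDiag X n)).hom
  | 0 => by
    show (ε F).hom ∘ₗ ((η F).hom ∘ₗ (F.map (toUnit X)).hom)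
      = (F.map (toUnit X)).hom
    have hηε : (ε F).hom ∘ₗ (η F).hom = LinearMap.id :=
      congrArg ModuleCat.Hom.hom (Functor.Monoidal.η_ε (F := F))
    rw [← LinearMap.comp_assoc, hηε, LinearMap.id_comp]
  | 1 => by
    have h := Functor.LaxMonoidal.right_unitality_inv F X
    have h' : (F.map (ρ_ X).inv).hom
        = (μ F X (𝟙_ C)).hom ∘ₗ ((F.obj X : ModuleCat k) ◁ ε F).hom ∘ₗ
          (ρ_ (F.obj X)).inv.hom := congrArg ModuleCat.Hom.hom h.symm
    have hρ : (ρ_ (F.obj X)).inv.hom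
        = (TensorProduct.rid k (F.obj X)).symm.toLinearMap := by
      ext x
      rfl
    show (μ F X (opow X 0)).hom ∘ₗ
        ((F.obj X : ModuleCat k) ◁ muPow F X 0).hom ∘ₗ
        (TensorProduct.rid k (F.obj X)).symm.toLinearMap
      = (F.map (iterDiag X 1)).hom
    rw [hρ] at h'
    exact h'.symm
  | n + 2 => by
    have IH := comul_compat (n + 1)
    have hdiag : F.map (cdiag X)
        = (F.map (cdiag X) ≫ δ F X X) ≫ μ F X X := by
      have hδμ := Functor.Monoidal.δ_μ (F := F) (X := X) (Y := X)
      change F.map (cdiag X) = (F.map (cdiag X) ≫ δ F X X) ≫ μ F X X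
      rw [Category.assoc, hδμ, Category.comp_id]
    have core : (F.map (cdiag X) ≫ δ F X X) ▷ Tpow k (F.obj X) n
          ≫ (α_ (F.obj X) (F.obj X) (Tpow k (F.obj X) n)).hom
          ≫ ((F.obj X : ModuleCat k) ◁ (((F.obj X : ModuleCat k) ◁ muPow F X n) ≫
              μ F X (opow X n))) ≫ μ F X (X ⊗ opow X n)
        = (((F.obj X : ModuleCat k) ◁ muPow F X n) ≫ μ F X (opow X n)) ≫
            F.map (cdiag X ▷ opow X n)
            ≫ F.map (α_ X X (opow X n)).hom := by
      conv_rhs => rw [Category.assoc,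
        ← μ_natural_left_assoc F (cdiag X) (opow X n), hdiag,
        comp_whiskerRight, Category.assoc,
        Functor.LaxMonoidal.associativity F X X (opow X n),
        ← Category.assoc, whisker_exchange, Category.assoc,
        associator_naturality_right_assoc (F.obj X) (F.obj X) (muPow F X n)]
      conv_lhs => rw [MonoidalCategory.whiskerLeft_comp, Category.assoc]
    show (muPow F X (n + 2)).hom ∘ₗ
        ((TensorProduct.assoc k (F.obj X) (F.obj X) (Tpow k (F.obj X) n)).toLinearMap
          ∘ₗ (LinearMap.rTensor (Tpow k (F.obj X) n)
            ((δ F X X).hom ∘ₗ (F.map (cdiag X)).hom))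
          ∘ₗ (iterComul ((δ F X X).hom ∘ₗ (F.map (cdiag X)).hom)
              ((η F).hom ∘ₗ (F.map (toUnit X)).hom) (n + 1)))
      = (F.map (iterDiag X (n + 2))).hom
    have hFmap : (F.map (iterDiag X (n + 2))).hom
        = (F.map (α_ X X (opow X n)).hom).hom
          ∘ₗ (F.map (cdiag X ▷ opow X n)).hom
          ∘ₗ (F.map (iterDiag X (n + 1))).hom := by
      have e : F.map (iterDiag X (n + 2)) = F.map (iterDiag X (n + 1)) ≫
          F.map (cdiag X ▷ opow X n) ≫ F.map (α_ X X (opow X n)).hom :=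
        (F.map_comp (iterDiag X (n + 1)) (cdiag X ▷ opow X n ≫ (α_ X X (opow X n)).hom)).trans
          (congrArg (F.map (iterDiag X (n + 1)) ≫ ·) (F.map_comp _ _))
      rw [e]
      rfl
    rw [hFmap, ← IH]
    have core' : (muPow F X (n + 2)).hom ∘ₗ
          ((TensorProduct.assoc k (F.obj X) (F.obj X) (Tpow k (F.obj X) n)).toLinearMap
            ∘ₗ (LinearMap.rTensor (Tpow k (F.obj X) n)
              ((δ F X X).hom ∘ₗ (F.map (cdiag X)).hom)))
        = ((F.map (α_ X X (opow X n)).hom).hom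
            ∘ₗ (F.map (cdiag X ▷ opow X n)).hom)
          ∘ₗ (muPow F X (n + 1)).hom := by
      have hc : (muPow F X (n + 2)).hom ∘ₗ
            ((TensorProduct.assoc k (F.obj X) (F.obj X)
                (Tpow k (F.obj X) n)).toLinearMap
              ∘ₗ (LinearMap.rTensor (Tpow k (F.obj X) n)
                ((δ F X X).hom ∘ₗ (F.map (cdiag X)).hom)))
          = (F.map (α_ X X (opow X n)).hom).hom
            ∘ₗ ((F.map (cdiag X ▷ opow X n)).hom
              ∘ₗ (muPow F X (n + 1)).hom) := congrArg ModuleCat.Hom.hom core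
      rw [hc]
      rfl
    calc (muPow F X (n + 2)).hom ∘ₗ
          ((TensorProduct.assoc k (F.obj X) (F.obj X) (Tpow k (F.obj X) n)).toLinearMap
            ∘ₗ (LinearMap.rTensor (Tpow k (F.obj X) n)
              ((δ F X X).hom ∘ₗ (F.map (cdiag X)).hom))
            ∘ₗ (iterComul ((δ F X X).hom ∘ₗ (F.map (cdiag X)).hom)
                ((η F).hom ∘ₗ (F.map (toUnit X)).hom) (n + 1)))
        = ((muPow F X (n + 2)).hom ∘ₗ
            ((TensorProduct.assoc k (F.obj X) (F.obj X) (Tpow k (F.obj X) n)).toLinearMap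
              ∘ₗ (LinearMap.rTensor (Tpow k (F.obj X) n)
                ((δ F X X).hom ∘ₗ (F.map (cdiag X)).hom))))
          ∘ₗ (iterComul ((δ F X X).hom ∘ₗ (F.map (cdiag X)).hom)
              ((η F).hom ∘ₗ (F.map (toUnit X)).hom) (n + 1)) := by
          rfl
      _ = _ := by
          rw [core']
          rfl

lemma eAug_eq (hnull : CategoryTheory.Limits.IsInitial (𝟙_ C)) :
    eAug ((η F).hom ∘ₗ (F.map (toUnit X)).hom)
        ((F.map (hnull.to X)).hom ((ε F).hom (1 : k)))
      = LinearMap.id - (F.map (toUnit X ≫ hnull.to X)).hom := by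
  unfold eAug
  congr 1
  have key : LinearMap.toSpanSingleton k (F.obj X) ((F.map (hnull.to X)).hom ((ε F).hom (1 : k)))
      = (F.map (hnull.to X)).hom ∘ₗ (ε F).hom := by
    apply LinearMap.ext_ring
    simp only [LinearMap.toSpanSingleton_apply, LinearMap.coe_comp, Function.comp_apply,
      one_smul]
  have hεη : (η F).hom ∘ₗ (ε F).hom
      = LinearMap.id := congrArg ModuleCat.Hom.hom (Functor.Monoidal.ε_η (F := F))
  have hηε : (ε F).hom ∘ₗ (η F).hom
      = LinearMap.id := congrArg ModuleCat.Hom.hom (Functor.Monoidal.η_ε (F := F))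
  calc LinearMap.toSpanSingleton k (F.obj X) ((F.map (hnull.to X)).hom ((ε F).hom (1 : k))) ∘ₗ
        ((η F).hom ∘ₗ (F.map (toUnit X)).hom)
      = (F.map (hnull.to X)).hom ∘ₗ
          ((ε F).hom ∘ₗ (η F).hom) ∘ₗ (F.map (toUnit X)).hom := by
        rw [key]
        simp only [LinearMap.comp_assoc]
    _ = (F.map (hnull.to X)).hom ∘ₗ (F.map (toUnit X)).hom := by
        rw [hηε, LinearMap.id_comp]
    _ = (F.map (toUnit X ≫ hnull.to X)).hom := by
        rw [F.map_comp]
        rfl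


end Stmt19Aux

attribute [local instance] CategoryTheory.BraidedCategory.ofCartesianMonoidalCategory

open CategoryTheory MonoidalCategory CartesianMonoidalCategory Functor.LaxMonoidal
  Functor.OplaxMonoidal in
/-- For a symmetric monoidal (exponential) functor `F : C → Mod_k` on a category with finite
products whose terminal object is a zero object, the `n`-th polynomial approximation of `F`
at `X` (the kernel of `χ ∘ F(Δ^{(n+1)}_X)`) coincides with the `n`-th coradical filtration of
the coaugmented coalgebra `F̃(X)` (whose comultiplication is `μ⁻¹ ∘ F(Δ_X)`, counit
`F(∗) ≅ k` composed with `F(ε_X)`, and coaugmentation induced by `F(η_X)`). -/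
theorem stmt19 {k : Type u} [CommRing k] {C : Type u} [SmallCategory C]
    [CartesianMonoidalCategory C] (hnull : CategoryTheory.Limits.IsInitial (𝟙_ C))
    (F : C ⥤ ModuleCat.{u} k) [F.Braided] (X : C) (n : ℕ) :
    LinearMap.ker
        ((((List.ofFn fun m : Fin (n + 1) =>
              (LinearMap.id - (F.map (tauAt hnull X (n + 1) m)).hom :
                F.obj (opow X (n + 1)) →ₗ[k] F.obj (opow X (n + 1)))).foldr
            (· ∘ₗ ·) LinearMap.id)
          ∘ₗ ((F.map (iterDiag X (n + 1))).hom : F.obj X →ₗ[k] F.obj (opow X (n + 1)))))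
      = corad
          (((δ F X X).hom ∘ₗ (F.map (cdiag X)).hom : F.obj X →ₗ[k] F.obj X ⊗[k] F.obj X))
          (((η F).hom ∘ₗ (F.map (toUnit X)).hom : F.obj X →ₗ[k] k))
          ((F.map (hnull.to X)).hom ((ε F).hom (1 : k)))
          n := by
  
  have key : (((List.ofFn fun m : Fin (n + 1) =>
          (LinearMap.id - (F.map (tauAt hnull X (n + 1) m)).hom :
            F.obj (opow X (n + 1)) →ₗ[k] F.obj (opow X (n + 1)))).foldr
        (· ∘ₗ ·) LinearMap.id)
      ∘ₗ ((F.map (iterDiag X (n + 1))).hom : F.obj X →ₗ[k] F.obj (opow X (n + 1))))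
      = (muPow F X (n + 1)).hom ∘ₗ
          deltaPow (((δ F X X).hom ∘ₗ (F.map (cdiag X)).hom : F.obj X →ₗ[k] F.obj X ⊗[k] F.obj X))
            (((η F).hom ∘ₗ (F.map (toUnit X)).hom : F.obj X →ₗ[k] k))
            ((F.map (hnull.to X)).hom ((ε F).hom (1 : k))) (n + 1) := by
    rw [deltaPow, eAug_eq F X hnull, ← LinearMap.comp_assoc, ← chi_compat F X hnull (n + 1)]
    rw [LinearMap.comp_assoc, comul_compat F X (n + 1)]
    rfl
  rw [key, LinearMap.ker_comp, LinearMap.ker_eq_bot.2 (muPow_injective F X (n + 1)),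
    Submodule.comap_bot]
  rfl
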